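/- Let p be a prime with p > 3 and let g denote the multiplicative order of 2 in (ℤ/pℤ)^*. Let n = 2^b + 2^a where b > a ≥ 0 and n ≥ 5, and suppose a ≡ b ≡ g−1 (mod g). Then the cyclotomic polynomial Φ_{2p}(t) divides the descent set polynomial Q_n(t). -/

import Mathlib

/-- The descent set of a permutation of `Fin n`, as a subset of `[n-1] = {1,…,n-1}`
(1-based positions): `i` is a descent if `π(i) > π(i+1)`. -/
def descentSet (n : ℕ) (π : Equiv.Perm (Fin n)) : Finset ℕ :=
  (Finset.Ico 1 n).filter fun i => ∀ h : i < n, π ⟨i, h⟩ < π ⟨i - 1, by omega⟩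

/-- The descent set statistic `β_n(S)`: the number of permutations of `{1,…,n}`
with descent set `S`. -/
def beta (n : ℕ) (S : Finset ℕ) : ℕ :=
  (Finset.univ.filter fun π : Equiv.Perm (Fin n) => descentSet n π = S).card

/-- The descent set polynomial `Q_n(t) = ∑_{S ⊆ [n-1]} t^{β_n(S)}`. -/
noncomputable def Q (n : ℕ) : Polynomial ℤ :=
  ∑ S ∈ (Finset.Ico 1 n).powerset, Polynomial.X ^ beta n S


open Finset

namespace CEPW

lemma mem_descentSet_iff {n : ℕ} (π : Equiv.Perm (Fin n)) {i : ℕ} (h1 : 1 ≤ i) (h2 : i < n) :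
    i ∈ descentSet n π ↔ π ⟨i, h2⟩ < π ⟨i - 1, by omega⟩ := by
  unfold descentSet
  rw [Finset.mem_filter]
  constructor
  · rintro ⟨-, h⟩; exact h h2
  · intro h; exact ⟨Finset.mem_Ico.mpr ⟨h1, h2⟩, fun _ => h⟩

lemma descentSet_subset_Ico {n : ℕ} (π : Equiv.Perm (Fin n)) :
    descentSet n π ⊆ Finset.Ico 1 n := Finset.filter_subset _ _

lemma descentSet_one {n : ℕ} : descentSet n (1 : Equiv.Perm (Fin n)) = ∅ := by
  ext i
  simp only [Finset.notMem_empty, iff_false, descentSet, Finset.mem_filter, Finset.mem_Ico]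
  rintro ⟨⟨h1, h2⟩, h⟩
  have := h h2
  simp only [Equiv.Perm.coe_one, id_eq] at this
  rw [Fin.lt_def] at this
  simp only at this
  omega

/-- `α_n(T)`: number of permutations with descent set contained in `T`. -/
def alphaCount (n : ℕ) (T : Finset ℕ) : ℕ :=
  (Finset.univ.filter fun π : Equiv.Perm (Fin n) => descentSet n π ⊆ T).card

lemma alphaCount_eq_sum_beta (n : ℕ) (T : Finset ℕ) :
    alphaCount n T = ∑ R ∈ T.powerset, beta n R := by
  unfold alphaCount
  rw [Finset.card_eq_sum_card_fiberwise
    (f := fun π : Equiv.Perm (Fin n) => descentSet n π) (t := T.powerset)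
    (fun π hπ => Finset.mem_powerset.mpr (Finset.mem_filter.mp hπ).2)]
  refine Finset.sum_congr rfl fun R hR => ?_
  unfold beta
  congr 1
  ext π
  simp only [Finset.mem_filter, Finset.mem_univ, true_and]
  constructor
  · rintro ⟨-, h⟩; exact h
  · intro h; exact ⟨h ▸ Finset.mem_powerset.mp hR, h⟩

/-! ### Order-preserving permutations moving one flag to another -/

variable {n : ℕ}

/-- Order isomorphism between two finsets of the same size `k`. -/
noncomputable def segEquiv (s t : Finset (Fin n)) {k : ℕ} (hs : s.card = k) (ht : t.card = k) :
    {v // v ∈ s} ≃o {v // v ∈ t} :=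
  (s.orderIsoOfFin hs).symm.trans (t.orderIsoOfFin ht)

lemma segEquiv_symm (s t : Finset (Fin n)) {k : ℕ} (hs : s.card = k) (ht : t.card = k) :
    (segEquiv s t hs ht).symm = segEquiv t s ht hs := rfl

/-- A pair of nested subsets with prescribed sizes. -/
structure Flag (n u w : ℕ) where
  A : Finset (Fin n)
  B : Finset (Fin n)
  hA : A.card = u
  hB : B.card = w
  hAB : A ⊆ B

namespace Flag

variable {u w : ℕ} (F F' : Flag n u w)

lemma card_sdiff' : (F.B \ F.A).card = w - u := by
  rw [Finset.card_sdiff_of_subset F.hAB, F.hA, F.hB]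

lemma card_compl' : (Finset.univ \ F.B).card = n - w := by
  rw [Finset.card_sdiff_of_subset (Finset.subset_univ _), Finset.card_univ, Fintype.card_fin, F.hB]

/-- The underlying map of the permutation moving flag `F` to flag `F'`. -/
noncomputable def pm (v : Fin n) : Fin n :=
  if hv : v ∈ F.A then (segEquiv F.A F'.A F.hA F'.hA ⟨v, hv⟩ : {x // x ∈ F'.A}).1
  else if hv2 : v ∈ F.B then
    (segEquiv (F.B \ F.A) (F'.B \ F'.A) F.card_sdiff' F'.card_sdiff'
      ⟨v, Finset.mem_sdiff.mpr ⟨hv2, hv⟩⟩).1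
  else
    (segEquiv (Finset.univ \ F.B) (Finset.univ \ F'.B) F.card_compl' F'.card_compl'
      ⟨v, Finset.mem_sdiff.mpr ⟨Finset.mem_univ v, hv2⟩⟩).1

lemma pm_mem_A {v : Fin n} (hv : v ∈ F.A) : F.pm F' v ∈ F'.A := by
  rw [pm, dif_pos hv]; exact Subtype.mem _

lemma pm_mem_BA {v : Fin n} (hv2 : v ∈ F.B) (hv : v ∉ F.A) : F.pm F' v ∈ F'.B \ F'.A := by
  rw [pm, dif_neg hv, dif_pos hv2]; exact Subtype.mem _

lemma pm_mem_C {v : Fin n} (hv2 : v ∉ F.B) : F.pm F' v ∈ Finset.univ \ F'.B := by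
  have hv : v ∉ F.A := fun h => hv2 (F.hAB h)
  rw [pm, dif_neg hv, dif_neg hv2]; exact Subtype.mem _

lemma pm_pm {v : Fin n} : F'.pm F (F.pm F' v) = v := by
  by_cases hv : v ∈ F.A
  · have h1 := F.pm_mem_A F' hv
    have hval : F.pm F' v = (segEquiv F.A F'.A F.hA F'.hA ⟨v, hv⟩ : {x // x ∈ F'.A}).1 := by
      rw [pm, dif_pos hv]
    rw [pm, dif_pos h1]
    have : (⟨F.pm F' v, h1⟩ : {x // x ∈ F'.A}) = segEquiv F.A F'.A F.hA F'.hA ⟨v, hv⟩ :=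
      Subtype.ext hval
    rw [this, ← segEquiv_symm, OrderIso.symm_apply_apply]
  · by_cases hv2 : v ∈ F.B
    · have h1 := F.pm_mem_BA F' hv2 hv
      have h1B := (Finset.mem_sdiff.mp h1).1
      have h1A := (Finset.mem_sdiff.mp h1).2
      have hval : F.pm F' v = (segEquiv (F.B \ F.A) (F'.B \ F'.A) F.card_sdiff' F'.card_sdiff'
          ⟨v, Finset.mem_sdiff.mpr ⟨hv2, hv⟩⟩ : {x // x ∈ F'.B \ F'.A}).1 := by
        rw [pm, dif_neg hv, dif_pos hv2]
      rw [pm, dif_neg h1A, dif_pos h1B]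
      have : (⟨F.pm F' v, Finset.mem_sdiff.mpr ⟨h1B, h1A⟩⟩ : {x // x ∈ F'.B \ F'.A}) =
          segEquiv (F.B \ F.A) (F'.B \ F'.A) F.card_sdiff' F'.card_sdiff'
            ⟨v, Finset.mem_sdiff.mpr ⟨hv2, hv⟩⟩ := Subtype.ext hval
      rw [this, ← segEquiv_symm, OrderIso.symm_apply_apply]
    · have h1 := F.pm_mem_C F' hv2
      have h1B := (Finset.mem_sdiff.mp h1).2
      have h1A : F.pm F' v ∉ F'.A := fun h => h1B (F'.hAB h)
      have hval : F.pm F' v = (segEquiv (Finset.univ \ F.B) (Finset.univ \ F'.B)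
          F.card_compl' F'.card_compl'
          ⟨v, Finset.mem_sdiff.mpr ⟨Finset.mem_univ v, hv2⟩⟩ :
          {x // x ∈ Finset.univ \ F'.B}).1 := by
        rw [pm, dif_neg hv, dif_neg hv2]
      rw [pm, dif_neg h1A, dif_neg h1B]
      have : (⟨F.pm F' v, Finset.mem_sdiff.mpr ⟨Finset.mem_univ _, h1B⟩⟩ :
          {x // x ∈ Finset.univ \ F'.B}) =
          segEquiv (Finset.univ \ F.B) (Finset.univ \ F'.B) F.card_compl' F'.card_compl'
            ⟨v, Finset.mem_sdiff.mpr ⟨Finset.mem_univ v, hv2⟩⟩ := Subtype.ext hval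
      rw [this, ← segEquiv_symm, OrderIso.symm_apply_apply]

/-- The permutation moving flag `F` to flag `F'`. -/
noncomputable def perm : Equiv.Perm (Fin n) :=
  ⟨F.pm F', F'.pm F, fun _ => pm_pm F F', fun _ => pm_pm F' F⟩

lemma perm_apply (v : Fin n) : F.perm F' v = F.pm F' v := rfl

lemma perm_symm : (F.perm F').symm = F'.perm F := rfl

lemma perm_mem_A_iff {v : Fin n} : F.perm F' v ∈ F'.A ↔ v ∈ F.A := by
  constructor
  · intro h
    by_contra hv
    by_cases hv2 : v ∈ F.B
    · exact (Finset.mem_sdiff.mp (F.pm_mem_BA F' hv2 hv)).2 h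
    · exact (Finset.mem_sdiff.mp (F.pm_mem_C F' hv2)).2 (F'.hAB h)
  · exact fun h => F.pm_mem_A F' h

lemma perm_mem_B_iff {v : Fin n} : F.perm F' v ∈ F'.B ↔ v ∈ F.B := by
  constructor
  · intro h
    by_contra hv2
    exact (Finset.mem_sdiff.mp (F.pm_mem_C F' hv2)).2 h
  · intro h
    by_cases hv : v ∈ F.A
    · exact F'.hAB (F.pm_mem_A F' hv)
    · exact (Finset.mem_sdiff.mp (F.pm_mem_BA F' h hv)).1

/-- same-piece relation -/
def samePiece (F : Flag n u w) (v v' : Fin n) : Prop :=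
  (v ∈ F.A ∧ v' ∈ F.A) ∨ (v ∈ F.B ∧ v ∉ F.A ∧ v' ∈ F.B ∧ v' ∉ F.A) ∨ (v ∉ F.B ∧ v' ∉ F.B)

lemma samePiece_symm {F : Flag n u w} {v v' : Fin n} (h : F.samePiece v v') :
    F.samePiece v' v := by
  rcases h with h | h | h
  · exact Or.inl ⟨h.2, h.1⟩
  · exact Or.inr (Or.inl ⟨h.2.2.1, h.2.2.2, h.1, h.2.1⟩)
  · exact Or.inr (Or.inr ⟨h.2, h.1⟩)

lemma pm_lt_of_samePiece {v v' : Fin n} (h : F.samePiece v v') (hlt : v < v') :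
    F.pm F' v < F.pm F' v' := by
  rcases h with ⟨h1, h2⟩ | ⟨h1, h2, h3, h4⟩ | ⟨h1, h2⟩
  · rw [pm, dif_pos h1, pm, dif_pos h2]
    have : (⟨v, h1⟩ : {x // x ∈ F.A}) < ⟨v', h2⟩ := by exact hlt
    exact (segEquiv F.A F'.A F.hA F'.hA).lt_iff_lt.mpr this
  · rw [pm, dif_neg h2, dif_pos h1, pm, dif_neg h4, dif_pos h3]
    have : (⟨v, Finset.mem_sdiff.mpr ⟨h1, h2⟩⟩ : {x // x ∈ F.B \ F.A}) <
        ⟨v', Finset.mem_sdiff.mpr ⟨h3, h4⟩⟩ := by exact hlt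
    exact (segEquiv _ _ F.card_sdiff' F'.card_sdiff').lt_iff_lt.mpr this
  · have hA1 : v ∉ F.A := fun h => h1 (F.hAB h)
    have hA2 : v' ∉ F.A := fun h => h2 (F.hAB h)
    rw [pm, dif_neg hA1, dif_neg h1, pm, dif_neg hA2, dif_neg h2]
    have : (⟨v, Finset.mem_sdiff.mpr ⟨Finset.mem_univ _, h1⟩⟩ :
        {x // x ∈ Finset.univ \ F.B}) < ⟨v', Finset.mem_sdiff.mpr ⟨Finset.mem_univ _, h2⟩⟩ := by
      exact hlt
    exact (segEquiv _ _ F.card_compl' F'.card_compl').lt_iff_lt.mpr this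

lemma perm_lt_iff_of_samePiece {v v' : Fin n} (h : F.samePiece v v') :
    F.perm F' v < F.perm F' v' ↔ v < v' := by
  constructor
  · intro hlt
    rcases lt_trichotomy v v' with hc | hc | hc
    · exact hc
    · subst hc; exact absurd hlt (lt_irrefl _)
    · exact absurd (F.pm_lt_of_samePiece F' (samePiece_symm h) hc) (asymm hlt)
  · exact F.pm_lt_of_samePiece F' h

end Flag

end CEPW
namespace CEPW

variable {n : ℕ}

/-- positions `< k` -/
def posSet (n k : ℕ) : Finset (Fin n) := Finset.univ.filter fun v => (v : ℕ) < k

lemma posSet_card {k : ℕ} (hk : k ≤ n) : (posSet n k).card = k := by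
  have : posSet n k = Finset.map (Fin.castLEEmb hk) Finset.univ := by
    ext v
    constructor
    · intro hv
      rw [posSet, Finset.mem_filter] at hv
      exact Finset.mem_map.mpr ⟨⟨(v : ℕ), hv.2⟩, Finset.mem_univ _, by ext; rfl⟩
    · intro hv
      obtain ⟨j, -, rfl⟩ := Finset.mem_map.mp hv
      exact Finset.mem_filter.mpr ⟨Finset.mem_univ _, j.isLt⟩
  rw [this, Finset.card_map, Finset.card_univ, Fintype.card_fin]

lemma posSet_mono {k k' : ℕ} (h : k ≤ k') : posSet n k ⊆ posSet n k' := by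
  intro v hv
  simp only [posSet, Finset.mem_filter, Finset.mem_univ, true_and] at hv ⊢
  omega

/-- values occupying the first `k` positions of `π` -/
def valSet (k : ℕ) (π : Equiv.Perm (Fin n)) : Finset (Fin n) :=
  Finset.univ.filter fun v => ((π.symm v : Fin n) : ℕ) < k

lemma mem_valSet {k : ℕ} {π : Equiv.Perm (Fin n)} {v : Fin n} :
    v ∈ valSet k π ↔ ((π.symm v : Fin n) : ℕ) < k := by
  simp [valSet]

lemma apply_mem_valSet {k : ℕ} {π : Equiv.Perm (Fin n)} {j : Fin n} :
    π j ∈ valSet k π ↔ (j : ℕ) < k := by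
  rw [mem_valSet, Equiv.symm_apply_apply]

lemma valSet_card {k : ℕ} (hk : k ≤ n) (π : Equiv.Perm (Fin n)) :
    (valSet k π).card = k := by
  have himg : valSet k π = (posSet n k).image π := by
    ext v
    simp only [mem_valSet, Finset.mem_image, posSet, Finset.mem_filter, Finset.mem_univ, true_and]
    constructor
    · intro h; exact ⟨π.symm v, h, Equiv.apply_symm_apply _ _⟩
    · rintro ⟨j, hj, rfl⟩; rwa [Equiv.symm_apply_apply]
  rw [himg, Finset.card_image_of_injective _ π.injective, posSet_card hk]

lemma valSet_one {k : ℕ} : valSet k (1 : Equiv.Perm (Fin n)) = posSet n k := by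
  ext v; rw [mem_valSet, posSet, Finset.mem_filter]; simp [Equiv.Perm.one_symm]

end CEPW
namespace CEPW

variable {n : ℕ}

lemma sigma_pair_eq {X : Type} {a c : X} {b d : X} :
    (⟨a, b⟩ : Σ _ : X, X) = ⟨c, d⟩ ↔ a = c ∧ b = d := by
  constructor
  · intro h
    injection h with h1 h2
    exact ⟨h1, h2⟩
  · rintro ⟨rfl, rfl⟩; rfl

lemma fiber_move {u w : ℕ} (V : Finset ℕ) (hu : u ∈ V) (hw : w ∈ V)
    (F F' : Flag n u w) (π : Equiv.Perm (Fin n))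
    (hdes : descentSet n π ⊆ V) (hB : valSet w π = F.B) (hA : valSet u π = F.A) :
    descentSet n (π.trans (F.perm F')) ⊆ V ∧ valSet w (π.trans (F.perm F')) = F'.B ∧
      valSet u (π.trans (F.perm F')) = F'.A := by
  have hposA : ∀ j : Fin n, π j ∈ F.A ↔ (j : ℕ) < u := fun j => by
    rw [← hA, apply_mem_valSet]
  have hposB : ∀ j : Fin n, π j ∈ F.B ↔ (j : ℕ) < w := fun j => by
    rw [← hB, apply_mem_valSet]
  have huw : u ≤ w := by
    by_contra hc
    push_neg at hc
    have h1 : F.A ⊆ F.B := F.hAB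
    have := Finset.card_le_card h1
    rw [F.hA, F.hB] at this
    omega
  refine ⟨?_, ?_, ?_⟩
  · intro i hi
    have hico := Finset.mem_Ico.mp (descentSet_subset_Ico _ hi)
    obtain ⟨h1, h2⟩ := hico
    rw [mem_descentSet_iff _ h1 h2] at hi
    by_cases hiu : i = u
    · exact hiu ▸ hu
    by_cases hiw : i = w
    · exact hiw ▸ hw
    set j2 : Fin n := ⟨i, h2⟩ with hj2
    set j1 : Fin n := ⟨i - 1, by omega⟩ with hj1
    have hsp : F.samePiece (π j2) (π j1) := by
      rcases lt_trichotomy i u with hc | hc | hc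
      · exact Or.inl ⟨(hposA j2).mpr hc, (hposA j1).mpr (by simp [hj1]; omega)⟩
      · exact absurd hc hiu
      · rcases lt_trichotomy i w with hd | hd | hd
        · refine Or.inr (Or.inl ⟨(hposB j2).mpr hd, ?_, (hposB j1).mpr (by simp [hj1]; omega),
            ?_⟩)
          · rw [hposA]; simp [hj2]; omega
          · rw [hposA]; simp [hj1]; omega
        · exact absurd hd hiw
        · refine Or.inr (Or.inr ⟨?_, ?_⟩)
          · rw [hposB]; simp [hj2]; omega
          · rw [hposB]; simp [hj1]; omega
    have hlt : F.perm F' (π j2) < F.perm F' (π j1) := hi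
    have := (F.perm_lt_iff_of_samePiece F' hsp).mp hlt
    exact hdes ((mem_descentSet_iff π h1 h2).mpr this)
  · ext v
    rw [mem_valSet]
    have hsymm : (π.trans (F.perm F')).symm v = π.symm ((F.perm F').symm v) := by
      simp [Equiv.symm_trans_apply]
    rw [hsymm]
    have h1 : ((π.symm ((F.perm F').symm v) : Fin n) : ℕ) < w ↔ (F.perm F').symm v ∈ F.B := by
      rw [← hB, mem_valSet]
    rw [h1]
    rw [← F.perm_mem_B_iff F' (v := (F.perm F').symm v), Equiv.apply_symm_apply]
  · ext v
    rw [mem_valSet]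
    have hsymm : (π.trans (F.perm F')).symm v = π.symm ((F.perm F').symm v) := by
      simp [Equiv.symm_trans_apply]
    rw [hsymm]
    have h1 : ((π.symm ((F.perm F').symm v) : Fin n) : ℕ) < u ↔ (F.perm F').symm v ∈ F.A := by
      rw [← hA, mem_valSet]
    rw [h1]
    rw [← F.perm_mem_A_iff F' (v := (F.perm F').symm v), Equiv.apply_symm_apply]

theorem alphaCount_factor (n : ℕ) (V : Finset ℕ) (hV : V ⊆ Finset.Ico 1 n)
    {u w : ℕ} (hu : u ∈ V) (hw : w ∈ V) (huw : u ≤ w) :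
    alphaCount n V = (n.choose w * w.choose u) *
      (Finset.univ.filter fun π : Equiv.Perm (Fin n) =>
        descentSet n π ⊆ V ∧ valSet w π = posSet n w ∧ valSet u π = posSet n u).card := by
  classical
  have hwn : w < n := (Finset.mem_Ico.mp (hV hw)).2
  have hun : u < n := (Finset.mem_Ico.mp (hV hu)).2
  set s := Finset.univ.filter fun π : Equiv.Perm (Fin n) => descentSet n π ⊆ V with hs
  set I : Finset ((_ : Finset (Fin n)) × Finset (Fin n)) :=
    (Finset.univ.powersetCard w).sigma (fun B => B.powersetCard u) with hI
  set Φ : Equiv.Perm (Fin n) → (_ : Finset (Fin n)) × Finset (Fin n) :=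
    fun π => ⟨valSet w π, valSet u π⟩ with hΦ
  have H : ∀ π ∈ s, Φ π ∈ I := by
    intro π _
    rw [hI, Finset.mem_sigma]
    constructor
    · exact Finset.mem_powersetCard.mpr ⟨Finset.subset_univ _, valSet_card hwn.le π⟩
    · refine Finset.mem_powersetCard.mpr ⟨?_, valSet_card hun.le π⟩
      intro v hv
      rw [mem_valSet] at hv ⊢
      omega
  set F0 : Flag n u w := ⟨posSet n u, posSet n w, posSet_card hun.le, posSet_card hwn.le,
    posSet_mono huw⟩ with hF0
  have hfib : ∀ σ ∈ I, (s.filter fun π => Φ π = σ).card =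
      (s.filter fun π => Φ π = (⟨posSet n w, posSet n u⟩ :
        (_ : Finset (Fin n)) × Finset (Fin n))).card := by
    rintro ⟨B, A⟩ hσ
    rw [hI, Finset.mem_sigma] at hσ
    obtain ⟨hBmem, hAmem⟩ := hσ
    have hBcard := (Finset.mem_powersetCard.mp hBmem).2
    have hAcard := (Finset.mem_powersetCard.mp hAmem).2
    have hABsub := (Finset.mem_powersetCard.mp hAmem).1
    set F : Flag n u w := ⟨A, B, hAcard, hBcard, hABsub⟩ with hF
    refine Finset.card_bij' (fun π _ => π.trans (F.perm F0)) (fun π _ => π.trans (F0.perm F))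
      ?_ ?_ ?_ ?_
    · intro π hπ
      rw [Finset.mem_filter] at hπ
      obtain ⟨hπs, hπf⟩ := hπ
      rw [hΦ, sigma_pair_eq] at hπf
      have := fiber_move V hu hw F F0 π (Finset.mem_filter.mp hπs).2 hπf.1 hπf.2
      rw [Finset.mem_filter]
      refine ⟨Finset.mem_filter.mpr ⟨Finset.mem_univ _, this.1⟩, ?_⟩
      show Φ (π.trans (F.perm F0)) = _
      rw [hΦ]
      rw [sigma_pair_eq]
      exact ⟨this.2.1, this.2.2⟩
    · intro π hπ
      rw [Finset.mem_filter] at hπ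
      obtain ⟨hπs, hπf⟩ := hπ
      rw [hΦ, sigma_pair_eq] at hπf
      have := fiber_move V hu hw F0 F π (Finset.mem_filter.mp hπs).2 hπf.1 hπf.2
      rw [Finset.mem_filter]
      refine ⟨Finset.mem_filter.mpr ⟨Finset.mem_univ _, this.1⟩, ?_⟩
      show Φ (π.trans (F0.perm F)) = _
      rw [hΦ]
      rw [sigma_pair_eq]
      exact ⟨this.2.1, this.2.2⟩
    · intro π _
      show (π.trans (F.perm F0)).trans (F0.perm F) = π
      have h : F0.perm F = (F.perm F0).symm := (Flag.perm_symm F F0).symm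
      rw [h, Equiv.trans_assoc, Equiv.self_trans_symm, Equiv.trans_refl]
    · intro π _
      show (π.trans (F0.perm F)).trans (F.perm F0) = π
      have h : F.perm F0 = (F0.perm F).symm := (Flag.perm_symm F0 F).symm
      rw [h, Equiv.trans_assoc, Equiv.self_trans_symm, Equiv.trans_refl]
  have hIcard : I.card = n.choose w * w.choose u := by
    rw [hI, Finset.card_sigma]
    have : ∀ B ∈ (Finset.univ : Finset (Fin n)).powersetCard w,
        (B.powersetCard u).card = w.choose u := by
      intro B hB
      rw [Finset.card_powersetCard, (Finset.mem_powersetCard.mp hB).2]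
    rw [Finset.sum_congr rfl this, Finset.sum_const, Finset.card_powersetCard,
      Finset.card_univ, Fintype.card_fin, smul_eq_mul]
  have hcount : alphaCount n V = s.card := rfl
  have hsets : (s.filter fun π => Φ π = (⟨posSet n w, posSet n u⟩ :
      (_ : Finset (Fin n)) × Finset (Fin n))) = Finset.univ.filter
      (fun π : Equiv.Perm (Fin n) => descentSet n π ⊆ V ∧ valSet w π = posSet n w ∧
        valSet u π = posSet n u) := by
    rw [hs, Finset.filter_filter]
    ext π
    simp only [Finset.mem_filter, Finset.mem_univ, true_and, hΦ, sigma_pair_eq]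
  rw [hcount, Finset.card_eq_sum_card_fiberwise H, Finset.sum_congr rfl hfib,
    Finset.sum_const, smul_eq_mul, hIcard, hsets]

end CEPW
namespace CEPW

variable {n : ℕ}

lemma perm_strictMono_of_adjacent {π : Equiv.Perm (Fin n)}
    (h : ∀ k, ∀ hk : k + 1 < n, π ⟨k, by omega⟩ < π ⟨k + 1, hk⟩) :
    ∀ i j : Fin n, i < j → π i < π j := by
  have key : ∀ d (i : Fin n) (hj : (i : ℕ) + d + 1 < n), π i < π ⟨(i : ℕ) + d + 1, hj⟩ := by
    intro d
    induction d with
    | zero =>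
      intro i hj
      have := h (i : ℕ) (by omega)
      simpa using this
    | succ d ih =>
      intro i hj
      have h1 : (i : ℕ) + d + 1 < n := by omega
      have h2 := ih i h1
      have h3 := h ((i : ℕ) + d + 1) (by omega)
      refine lt_trans h2 ?_
      have : (⟨(i : ℕ) + d + 1 + 1, by omega⟩ : Fin n) = ⟨(i : ℕ) + (d + 1) + 1, hj⟩ := by
        apply Fin.ext; simp; omega
      rw [← this]
      exact h3
  intro i j hij
  have hij' : (i : ℕ) < (j : ℕ) := hij
  have hd : (j : ℕ) = (i : ℕ) + ((j : ℕ) - (i : ℕ) - 1) + 1 := by omega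
  have : j = ⟨(i : ℕ) + ((j : ℕ) - (i : ℕ) - 1) + 1, by omega⟩ := by
    apply Fin.ext; simp; omega
  rw [this]
  exact key _ i _

lemma perm_eq_one_of_strictMono {π : Equiv.Perm (Fin n)}
    (h : ∀ i j : Fin n, i < j → π i < π j) : π = 1 := by
  have hle : ∀ (f : Fin n → Fin n), (∀ i j : Fin n, i < j → f i < f j) →
      ∀ k (hk : k < n), k ≤ ((f ⟨k, hk⟩ : Fin n) : ℕ) := by
    intro f hf k
    induction k with
    | zero => intro hk; exact Nat.zero_le _
    | succ k ih =>
      intro hk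
      have h1 := ih (by omega)
      have h2 : f ⟨k, by omega⟩ < f ⟨k + 1, hk⟩ := hf _ _ (by simp [Fin.lt_def])
      rw [Fin.lt_def] at h2
      omega
  have hsymm : ∀ i j : Fin n, i < j → π.symm i < π.symm j := by
    intro i j hij
    rcases lt_trichotomy (π.symm i) (π.symm j) with hc | hc | hc
    · exact hc
    · exfalso; have := congrArg π (congrArg id hc); simp at this; rw [this] at hij
      exact lt_irrefl _ hij
    · exfalso
      have := h _ _ hc
      rw [Equiv.apply_symm_apply, Equiv.apply_symm_apply] at this
      exact absurd hij (asymm this)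
  apply Equiv.ext
  intro i
  have h1 : (i : ℕ) ≤ ((π i : Fin n) : ℕ) := by
    have := hle π h (i : ℕ) i.isLt
    simpa using this
  have h2 : ((π i : Fin n) : ℕ) ≤ (i : ℕ) := by
    have := hle π.symm hsymm ((π i : Fin n) : ℕ) (π i).isLt
    simp only [Fin.eta] at this
    rw [Equiv.symm_apply_apply] at this
    exact this
  simp only [Equiv.Perm.coe_one, id_eq]
  apply Fin.ext
  omega

lemma singleton_fiber {x : ℕ} (hx1 : 1 ≤ x) (hxn : x < n) :
    (Finset.univ.filter fun π : Equiv.Perm (Fin n) =>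
      descentSet n π ⊆ {x} ∧ valSet x π = posSet n x ∧ valSet x π = posSet n x) = {1} := by
  ext π
  simp only [Finset.mem_filter, Finset.mem_univ, true_and, Finset.mem_singleton]
  constructor
  · rintro ⟨hdes, hval, -⟩
    have hadj : ∀ k, ∀ hk : k + 1 < n, π ⟨k, by omega⟩ < π ⟨k + 1, hk⟩ := by
      intro k hk
      by_cases hkx : k + 1 = x
      · have hmem : π ⟨k, by omega⟩ ∈ valSet x π := apply_mem_valSet.mpr (by simp; omega)
        rw [hval] at hmem
        have h1 : ((π ⟨k, by omega⟩ : Fin n) : ℕ) < x :=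
          (Finset.mem_filter.mp hmem).2
        have hmem2 : π ⟨k + 1, hk⟩ ∉ valSet x π := by
          rw [apply_mem_valSet]; simp; omega
        rw [hval] at hmem2
        have h2 : ¬ ((π ⟨k + 1, hk⟩ : Fin n) : ℕ) < x := by
          intro hc; exact hmem2 (Finset.mem_filter.mpr ⟨Finset.mem_univ _, hc⟩)
        rw [Fin.lt_def]
        omega
      · have hnotdes : k + 1 ∉ descentSet n π := by
          intro hc
          exact hkx (Finset.mem_singleton.mp (hdes hc))
        rw [mem_descentSet_iff π (by omega) hk] at hnotdes
        have hne : π ⟨k + 1, hk⟩ ≠ π ⟨k + 1 - 1, by omega⟩ := by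
          intro hc
          have := π.injective hc
          simp only [Fin.mk.injEq] at this
          omega
        have hge := lt_of_le_of_ne (not_lt.mp hnotdes) (Ne.symm hne)
        have : (⟨k + 1 - 1, by omega⟩ : Fin n) = ⟨k, by omega⟩ := by
          apply Fin.ext; simp
        rwa [this] at hge
    exact perm_eq_one_of_strictMono (perm_strictMono_of_adjacent hadj)
  · rintro rfl
    refine ⟨by rw [descentSet_one]; exact Finset.empty_subset _, valSet_one, valSet_one⟩

lemma alphaCount_singleton {x : ℕ} (hx1 : 1 ≤ x) (hxn : x < n) :
    alphaCount n {x} = n.choose x := by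
  have := alphaCount_factor n {x} (by
    intro i hi
    rw [Finset.mem_singleton] at hi
    rw [Finset.mem_Ico]
    omega) (Finset.mem_singleton_self x) (Finset.mem_singleton_self x) (le_refl x)
  rw [singleton_fiber hx1 hxn] at this
  simp [Nat.choose_self] at this
  exact this

end CEPW
namespace CEPW

variable {n : ℕ}

lemma powerset_insert_sum {M : Type*} [AddCommMonoid M] (u : ℕ) {S : Finset ℕ} (hu' : u ∉ S)
    (f : Finset ℕ → M) :
    ∑ R ∈ (insert u S).powerset, f R =
      ∑ R ∈ S.powerset, (f R + f (insert u R)) := by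
  rw [Finset.powerset_insert, Finset.sum_union, Finset.sum_image, Finset.sum_add_distrib]
  · intro R hR R' hR' hins
    have h1 : u ∉ R := fun hc => hu' (Finset.mem_powerset.mp hR hc)
    have h2 : u ∉ R' := fun hc => hu' (Finset.mem_powerset.mp hR' hc)
    rw [← Finset.erase_insert h1, ← Finset.erase_insert h2, hins]
  · rw [Finset.disjoint_left]
    intro R hR hR'
    obtain ⟨R', _, rfl⟩ := Finset.mem_image.mp hR'
    exact hu' (Finset.mem_powerset.mp hR (Finset.mem_insert_self u R'))

lemma beta_toggle_insert {q : ℕ} {u : ℕ} (hu : u ∈ Finset.Ico 1 n)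
    (Hα : ∀ T, T ⊆ Finset.Ico 1 n → u ∈ T → ((alphaCount n T : ZMod q) = 0)) :
    ∀ S, S ⊆ Finset.Ico 1 n → u ∉ S → ((beta n (insert u S) : ZMod q) + beta n S = 0) := by
  intro S
  induction S using Finset.strongInduction with
  | _ S ih =>
    intro hS hu'
    have hT : insert u S ⊆ Finset.Ico 1 n := Finset.insert_subset hu hS
    have h0 := Hα (insert u S) hT (Finset.mem_insert_self u S)
    have hsum : (alphaCount n (insert u S) : ZMod q) =
        ∑ R ∈ S.powerset, ((beta n R : ZMod q) + beta n (insert u R)) := by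
      rw [alphaCount_eq_sum_beta, Nat.cast_sum, powerset_insert_sum u hu']
    rw [hsum, ← Finset.add_sum_erase _ _ (Finset.mem_powerset_self S)] at h0
    have hz : ∑ R ∈ S.powerset.erase S, ((beta n R : ZMod q) + beta n (insert u R)) = 0 := by
      apply Finset.sum_eq_zero
      intro R hR
      have hRS : R ⊆ S := Finset.mem_powerset.mp (Finset.mem_of_mem_erase hR)
      have hRne : R ≠ S := Finset.ne_of_mem_erase hR
      have := ih R (Finset.ssubset_iff_subset_ne.mpr ⟨hRS, hRne⟩) (hRS.trans hS)
        (fun hc => hu' (hRS hc))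
      linear_combination this
    rw [hz, add_zero] at h0
    linear_combination h0

lemma two_pow_sub_one_cast {k : ℕ} (hk : 1 ≤ k) : ((2 ^ k - 1 : ℕ) : ZMod 2) = 1 := by
  have h1 : (1 : ℕ) ≤ 2 ^ k := Nat.one_le_two_pow
  rw [Nat.cast_sub h1, Nat.cast_pow]
  have h2 : ((2 : ℕ) : ZMod 2) = 0 := by decide
  rw [h2, zero_pow (by omega)]
  decide

lemma beta_toggle_insert_two {x : ℕ} (hx : x ∈ Finset.Ico 1 n)
    (Hα : ∀ T, T ⊆ Finset.Ico 1 n → x ∉ T →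
      ((alphaCount n (insert x T) : ZMod 2) = if T = ∅ then 1 else 0)) :
    ∀ S, S ⊆ Finset.Ico 1 n → x ∉ S →
      ((beta n (insert x S) : ZMod 2) = beta n S + 1) := by
  intro S
  induction S using Finset.strongInduction with
  | _ S ih =>
    intro hS hx'
    have h0 := Hα S hS hx'
    have hsum : (alphaCount n (insert x S) : ZMod 2) =
        ∑ R ∈ S.powerset, ((beta n R : ZMod 2) + beta n (insert x R)) := by
      rw [alphaCount_eq_sum_beta, Nat.cast_sum, powerset_insert_sum x hx']
    rw [hsum, ← Finset.add_sum_erase _ _ (Finset.mem_powerset_self S)] at h0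
    have hz : ∑ R ∈ S.powerset.erase S, ((beta n R : ZMod 2) + beta n (insert x R)) =
        ((2 ^ S.card - 1 : ℕ) : ZMod 2) := by
      have hone : ∀ R ∈ S.powerset.erase S,
          ((beta n R : ZMod 2) + beta n (insert x R)) = 1 := by
        intro R hR
        have hRS : R ⊆ S := Finset.mem_powerset.mp (Finset.mem_of_mem_erase hR)
        have hRne : R ≠ S := Finset.ne_of_mem_erase hR
        have hih := ih R (Finset.ssubset_iff_subset_ne.mpr ⟨hRS, hRne⟩) (hRS.trans hS)
          (fun hc => hx' (hRS hc))
        have hself : (beta n R : ZMod 2) + (beta n R : ZMod 2) = 0 :=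
          CharTwo.add_self_eq_zero _
        linear_combination hih + hself
      rw [Finset.sum_congr rfl hone, Finset.sum_const,
        Finset.card_erase_of_mem (Finset.mem_powerset_self S), Finset.card_powerset,
        nsmul_eq_mul, mul_one]
    rw [hz] at h0
    have hself : (beta n S : ZMod 2) + (beta n S : ZMod 2) = 0 :=
      CharTwo.add_self_eq_zero _
    by_cases hSe : S = ∅
    · have hc0 : ((2 ^ S.card - 1 : ℕ) : ZMod 2) = 0 := by subst hSe; simp
      rw [if_pos hSe, hc0, add_zero] at h0
      linear_combination h0 - hself
    · have hc1 : ((2 ^ S.card - 1 : ℕ) : ZMod 2) = 1 :=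
        two_pow_sub_one_cast (Finset.card_pos.mpr (Finset.nonempty_iff_ne_empty.mpr hSe))
      rw [if_neg hSe, hc1] at h0
      have h2 : (2 : ZMod 2) = 0 := by decide
      linear_combination h0 - hself - h2

/-! ### Toggle operation -/

def tog (u : ℕ) (S : Finset ℕ) : Finset ℕ := if u ∈ S then S.erase u else insert u S

lemma mem_tog {u z : ℕ} {S : Finset ℕ} :
    z ∈ tog u S ↔ (z = u ∧ u ∉ S) ∨ (z ≠ u ∧ z ∈ S) := by
  unfold tog
  by_cases hu : u ∈ S
  · rw [if_pos hu]
    simp only [Finset.mem_erase]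
    constructor
    · rintro ⟨h1, h2⟩; exact Or.inr ⟨h1, h2⟩
    · rintro (⟨rfl, h⟩ | ⟨h1, h2⟩)
      · exact absurd hu h
      · exact ⟨h1, h2⟩
  · rw [if_neg hu]
    simp only [Finset.mem_insert]
    constructor
    · rintro (rfl | h)
      · exact Or.inl ⟨rfl, hu⟩
      · by_cases hz : z = u
        · exact Or.inl ⟨hz, hu⟩
        · exact Or.inr ⟨hz, h⟩
    · rintro (⟨rfl, -⟩ | ⟨-, h⟩)
      · exact Or.inl rfl
      · exact Or.inr h

lemma tog_tog (u : ℕ) (S : Finset ℕ) : tog u (tog u S) = S := by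
  ext z
  by_cases hz : z = u
  · subst hz
    simp only [mem_tog]
    tauto
  · simp only [mem_tog, hz]
    tauto

lemma tog_comm {u v : ℕ} (huv : u ≠ v) (S : Finset ℕ) : tog u (tog v S) = tog v (tog u S) := by
  ext z
  simp only [mem_tog]
  by_cases hzu : z = u <;> by_cases hzv : z = v <;> subst_vars <;> tauto

lemma tog_subset {u : ℕ} {S : Finset ℕ} (hu : u ∈ Finset.Ico 1 n) (hS : S ⊆ Finset.Ico 1 n) :
    tog u S ⊆ Finset.Ico 1 n := by
  intro z hz
  rcases mem_tog.mp hz with ⟨rfl, -⟩ | ⟨-, h⟩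
  · exact hu
  · exact hS h

lemma mem_tog_self {u : ℕ} {S : Finset ℕ} : u ∈ tog u S ↔ u ∉ S := by
  rw [mem_tog]; tauto

lemma mem_tog_of_ne {u z : ℕ} {S : Finset ℕ} (h : z ≠ u) : z ∈ tog u S ↔ z ∈ S := by
  rw [mem_tog]; tauto

/-- toggling mod q negates beta, given the alpha hypothesis -/
lemma beta_tog {q : ℕ} {u : ℕ} (hu : u ∈ Finset.Ico 1 n)
    (Hα : ∀ T, T ⊆ Finset.Ico 1 n → u ∈ T → ((alphaCount n T : ZMod q) = 0)) :
    ∀ S, S ⊆ Finset.Ico 1 n → ((beta n (tog u S) : ZMod q) = - beta n S) := by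
  intro S hS
  by_cases hus : u ∈ S
  · have h1 : tog u S = S.erase u := if_pos hus
    have h2 : insert u (S.erase u) = S := Finset.insert_erase hus
    have := beta_toggle_insert hu Hα (S.erase u) ((Finset.erase_subset _ _).trans hS)
      (Finset.notMem_erase _ _)
    rw [h2] at this
    rw [h1]
    linear_combination this
  · have h1 : tog u S = insert u S := if_neg hus
    have := beta_toggle_insert hu Hα S hS hus
    rw [h1]
    linear_combination this

/-- toggling x mod 2 flips parity of beta -/
lemma beta_tog_two {x : ℕ} (hx : x ∈ Finset.Ico 1 n)
    (Hα : ∀ T, T ⊆ Finset.Ico 1 n → x ∉ T →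
      ((alphaCount n (insert x T) : ZMod 2) = if T = ∅ then 1 else 0)) :
    ∀ S, S ⊆ Finset.Ico 1 n → ((beta n (tog x S) : ZMod 2) = beta n S + 1) := by
  intro S hS
  by_cases hxs : x ∈ S
  · have h1 : tog x S = S.erase x := if_pos hxs
    have h2 : insert x (S.erase x) = S := Finset.insert_erase hxs
    have := beta_toggle_insert_two hx Hα (S.erase x) ((Finset.erase_subset _ _).trans hS)
      (Finset.notMem_erase _ _)
    rw [h2] at this
    rw [h1]
    have hself : (beta n (S.erase x) : ZMod 2) + (beta n (S.erase x) : ZMod 2) = 0 :=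
      CharTwo.add_self_eq_zero _
    have h2' : (2 : ZMod 2) = 0 := by decide
    linear_combination -this - h2'
  · have h1 : tog x S = insert x S := if_neg hxs
    rw [h1]
    exact beta_toggle_insert_two hx Hα S hS hxs

end CEPW
namespace CEPW

open Polynomial

lemma choose_pow_two_cast (t k : ℕ) :
    ((Nat.choose (2 ^ t) k : ℕ) : ZMod 2) = if k = 0 ∨ k = 2 ^ t then 1 else 0 := by
  split_ifs with h
  · rcases h with rfl | rfl
    · simp
    · simp [Nat.choose_self]
  · push_neg at h
    obtain ⟨h0, ht⟩ := h
    rcases lt_or_gt_of_ne ht with hlt | hgt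
    · have := Nat.Prime.dvd_choose_pow Nat.prime_two h0 ht
      exact (ZMod.natCast_eq_zero_iff _ _).mpr this
    · rw [Nat.choose_eq_zero_of_lt hgt, Nat.cast_zero]

lemma choose_n_even {a b : ℕ} (hab : a < b) {k : ℕ} (h0 : 0 < k) (hn : k < 2 ^ b + 2 ^ a)
    (ha : k ≠ 2 ^ a) (hb : k ≠ 2 ^ b) : ((Nat.choose (2 ^ b + 2 ^ a) k : ℕ) : ZMod 2) = 0 := by
  have hpow : 2 ^ a < 2 ^ b := Nat.pow_lt_pow_right one_lt_two hab
  rw [Nat.add_choose_eq, Nat.cast_sum]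
  apply Finset.sum_eq_zero
  rintro ⟨i, j⟩ hij
  rw [Finset.HasAntidiagonal.mem_antidiagonal] at hij
  rw [Nat.cast_mul, choose_pow_two_cast, choose_pow_two_cast]
  split_ifs with h1 h2
  · exfalso
    rcases h1 with rfl | rfl <;> rcases h2 with rfl | rfl <;> simp at hij <;> omega
  · rw [mul_zero]
  · rw [zero_mul]
  · rw [zero_mul]

lemma choose_n_x_odd {a b : ℕ} (hab : a < b) :
    ((Nat.choose (2 ^ b + 2 ^ a) (2 ^ a) : ℕ) : ZMod 2) = 1 := by
  have hpow : 2 ^ a < 2 ^ b := Nat.pow_lt_pow_right one_lt_two hab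
  have hpos : 0 < 2 ^ a := Nat.pow_pos (by omega)
  rw [Nat.add_choose_eq, Nat.cast_sum]
  rw [Finset.sum_eq_single ((0 : ℕ), 2 ^ a)]
  · simp [Nat.choose_self]
  · rintro ⟨i, j⟩ hij hne
    rw [Finset.HasAntidiagonal.mem_antidiagonal] at hij
    rw [Nat.cast_mul, choose_pow_two_cast, choose_pow_two_cast]
    split_ifs with h1 h2
    · exfalso
      rcases h1 with rfl | rfl <;> rcases h2 with rfl | rfl <;> simp at hij hne <;> omega
    · rw [mul_zero]
    · rw [zero_mul]
    · rw [zero_mul]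
  · intro h
    exfalso
    exact h (Finset.HasAntidiagonal.mem_antidiagonal.mpr (by omega))

lemma choose_zmod_p_zero {p : ℕ} (hp : p.Prime) {N u : ℕ} (hN : N % p = 1) (hu : 2 ≤ u % p) :
    ((N.choose u : ℕ) : ZMod p) = 0 := by
  haveI := Fact.mk hp
  have hl := Choose.choose_modEq_choose_mod_mul_choose_div (n := N) (k := u) (p := p)
  have h0 : (N % p).choose (u % p) = 0 := by
    rw [hN]
    exact Nat.choose_eq_zero_of_lt (by omega)
  rw [h0] at hl
  simp only [Nat.cast_zero, zero_mul] at hl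
  have := (ZMod.intCast_eq_intCast_iff _ _ _).mpr hl
  push_cast at this
  exact this

lemma cyc_dvd_X_pow_add_one {p : ℕ} (hp3 : 3 < p) {m : ℕ} (hpm : p ∣ m) (hm2 : ¬ 2 ∣ m) :
    Polynomial.cyclotomic (2 * p) ℤ ∣ Polynomial.X ^ m + 1 := by
  have hm0 : m ≠ 0 := by rintro rfl; exact hm2 (dvd_zero 2)
  have hdvd1 : Polynomial.cyclotomic (2 * p) ℤ ∣ Polynomial.X ^ (2 * m) - 1 := by
    rw [← Polynomial.prod_cyclotomic_eq_X_pow_sub_one (by omega) ℤ]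
    exact Finset.dvd_prod_of_mem _ (Nat.mem_divisors.mpr ⟨mul_dvd_mul_left 2 hpm, by omega⟩)
  have hfact : ((Polynomial.X : Polynomial ℤ) ^ m - 1) * (Polynomial.X ^ m + 1) =
      Polynomial.X ^ (2 * m) - 1 := by
    have h2 : (Polynomial.X : Polynomial ℤ) ^ (2 * m) = Polynomial.X ^ m * Polynomial.X ^ m := by
      rw [two_mul, pow_add]
    rw [h2]; ring
  have hirr := Polynomial.cyclotomic.irreducible (n := 2 * p) (by omega)
  have hprime : Prime (Polynomial.cyclotomic (2 * p) ℤ) :=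
    UniqueFactorizationMonoid.irreducible_iff_prime.mp hirr
  rw [← hfact] at hdvd1
  rcases hprime.dvd_or_dvd hdvd1 with h | h
  · exfalso
    rw [← Polynomial.prod_cyclotomic_eq_X_pow_sub_one (by omega) ℤ] at h
    obtain ⟨d, hd, hdvd⟩ := hprime.exists_mem_finset_dvd h
    have hd0 : 0 < d := Nat.pos_of_mem_divisors hd
    have hass := hirr.associated_of_dvd (Polynomial.cyclotomic.irreducible hd0) hdvd
    have heq := Polynomial.eq_of_monic_of_associated (Polynomial.cyclotomic.monic _ _)
      (Polynomial.cyclotomic.monic _ _) hass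
    have hde : 2 * p = d := Polynomial.cyclotomic_injective heq
    have hdm : d ∣ m := (Nat.mem_divisors.mp hd).1
    rw [← hde] at hdm
    exact hm2 ((dvd_mul_right 2 p).trans hdm)
  · exact h

end CEPW

open CEPW Finset Polynomial

/-- Let `p > 3` be prime with `g` the multiplicative order of `2` modulo `p`,
and let `n = 2^b + 2^a` with `b > a ≥ 0` and `n ≥ 5`. If
`a ≡ b ≡ g - 1 (mod g)`, then `Φ_{2p}` divides `Q_n(t)`. -/
theorem cyclotomic_two_p_dvd_order_minus_one (p a b g : ℕ) (hp : p.Prime) (hp3 : 3 < p)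
    (hg : g = orderOf (2 : ZMod p))
    (hab : a < b) (hn : 5 ≤ 2 ^ b + 2 ^ a)
    (hca : a % g = (g - 1) % g) (hcb : b % g = (g - 1) % g) :
    Polynomial.cyclotomic (2 * p) ℤ ∣ Q (2 ^ b + 2 ^ a) := by
  haveI := Fact.mk hp
  haveI : Fact (1 < p) := ⟨by omega⟩
  set n := 2 ^ b + 2 ^ a with hnn
  -- basic number theory about g
  have h2ne : (2 : ZMod p) ≠ 0 := by
    intro hc
    have hc' : ((2 : ℕ) : ZMod p) = 0 := by exact_mod_cast hc
    have := Nat.le_of_dvd (by norm_num) ((ZMod.natCast_eq_zero_iff 2 p).mp hc')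
    omega
  have hfin : IsOfFinOrder (2 : ZMod p) :=
    isOfFinOrder_iff_pow_eq_one.mpr ⟨p - 1, by omega, ZMod.pow_card_sub_one_eq_one h2ne⟩
  have hg0 : g ≠ 0 := by rw [hg]; exact (orderOf_pos_iff.mpr hfin).ne'
  have hg1 : g ≠ 1 := by
    rw [hg]
    intro hc
    have h21 := orderOf_eq_one_iff.mp hc
    have h1 : ((1 : ℕ) : ZMod p) = 0 := by
      push_cast
      linear_combination h21
    have := Nat.le_of_dvd one_pos ((ZMod.natCast_eq_zero_iff 1 p).mp h1)
    omega
  have hg2 : 2 ≤ g := by omega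
  have hgg : (2 : ZMod p) ^ g = 1 := by rw [hg]; exact pow_orderOf_eq_one _
  have hamod : a % g = g - 1 := by rw [hca, Nat.mod_eq_of_lt (by omega)]
  have hbmod : b % g = g - 1 := by rw [hcb, Nat.mod_eq_of_lt (by omega)]
  have ha1 : 1 ≤ a := by have := Nat.mod_le a g; omega
  have hpow_lt : 2 ^ a < 2 ^ b := Nat.pow_lt_pow_right one_lt_two hab
  have hA1 : 1 ≤ 2 ^ a := Nat.one_le_two_pow
  have hB1 : 1 ≤ 2 ^ b := Nat.one_le_two_pow
  have hxn : 2 ^ a < n := by omega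
  have hyn : 2 ^ b < n := by omega
  have h2a1 : 2 ^ (a + 1) ≤ 2 ^ b := Nat.pow_le_pow_right (by omega) (by omega)
  have h2a1' : 2 ^ (a + 1) = 2 * 2 ^ a := by rw [pow_succ]; ring
  have hu0n : 2 ^ a + 1 < n := by omega
  have hd2a : 2 ∣ 2 ^ a := dvd_pow_self 2 (by omega)
  have hd2b : 2 ∣ 2 ^ b := dvd_pow_self 2 (by omega)
  -- powers of two mod p
  have hpow_a : (2 : ZMod p) ^ a = 2 ^ (g - 1) := by
    have ha' : a = g * (a / g) + (g - 1) := by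
      have := Nat.div_add_mod a g
      omega
    rw [ha', pow_add, pow_mul, hgg, one_pow, one_mul]
  have hpow_b : (2 : ZMod p) ^ b = 2 ^ (g - 1) := by
    have hb' : b = g * (b / g) + (g - 1) := by
      have := Nat.div_add_mod b g
      omega
    rw [hb', pow_add, pow_mul, hgg, one_pow, one_mul]
  have hhalf : (2 : ZMod p) * 2 ^ (g - 1) = 1 := by
    rw [← pow_succ', show g - 1 + 1 = g by omega, hgg]
  have hpa_ne0 : (2 : ZMod p) ^ (g - 1) ≠ 0 := by
    intro hc
    rw [hc, mul_zero] at hhalf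
    exact one_ne_zero hhalf.symm
  have hpa_ne1 : (2 : ZMod p) ^ (g - 1) ≠ 1 := by
    intro hc
    have hle := orderOf_le_of_pow_eq_one (n := g - 1) (by omega) hc
    rw [← hg] at hle
    omega
  have h3ne : ((3 : ℕ) : ZMod p) ≠ 0 := by
    intro hc
    have := Nat.le_of_dvd (by norm_num) ((ZMod.natCast_eq_zero_iff 3 p).mp hc)
    omega
  have hcastx : ((2 ^ a : ℕ) : ZMod p) = 2 ^ (g - 1) := by push_cast; exact hpow_a
  have hcastn : ((n : ℕ) : ZMod p) = 1 := by
    rw [hnn]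
    push_cast
    rw [hpow_a, hpow_b]
    linear_combination hhalf
  have hnmod : n % p = 1 := by
    have h1 := congrArg ZMod.val hcastn
    rwa [ZMod.val_natCast, ZMod.val_one] at h1
  have hxmod : 2 ≤ 2 ^ a % p := by
    have h0 : 2 ^ a % p ≠ 0 := by
      intro hc
      have : ((2 ^ a : ℕ) : ZMod p) = 0 :=
        (ZMod.natCast_eq_zero_iff _ _).mpr (Nat.dvd_of_mod_eq_zero hc)
      rw [hcastx] at this
      exact hpa_ne0 this
    have h1 : 2 ^ a % p ≠ 1 := by
      intro hc
      have h2 : ((2 ^ a % p : ℕ) : ZMod p) = ((2 ^ a : ℕ) : ZMod p) := ZMod.natCast_mod _ _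
      rw [hc, hcastx] at h2
      exact hpa_ne1 (by rw [← h2]; norm_num)
    omega
  have hu0cast : ((2 ^ a + 1 : ℕ) : ZMod p) = 2 ^ (g - 1) + 1 := by
    push_cast
    rw [hpow_a]
  have hu0mod : 2 ≤ (2 ^ a + 1) % p := by
    have hkey : (2 : ZMod p) * (2 ^ (g - 1) + 1) = ((3 : ℕ) : ZMod p) := by
      push_cast
      linear_combination hhalf
    have h0 : (2 ^ a + 1) % p ≠ 0 := by
      intro hc
      have h1 : ((2 ^ a + 1 : ℕ) : ZMod p) = 0 :=
        (ZMod.natCast_eq_zero_iff _ _).mpr (Nat.dvd_of_mod_eq_zero hc)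
      rw [hu0cast] at h1
      rw [h1, mul_zero] at hkey
      exact h3ne hkey.symm
    have h1 : (2 ^ a + 1) % p ≠ 1 := by
      intro hc
      have h2 : (((2 ^ a + 1) % p : ℕ) : ZMod p) = ((2 ^ a + 1 : ℕ) : ZMod p) :=
        ZMod.natCast_mod _ _
      rw [hc, hu0cast] at h2
      have h4 : (2 ^ (g - 1) : ZMod p) = 0 := by
        have : ((1 : ℕ) : ZMod p) = (1 : ZMod p) := by norm_num
        rw [this] at h2
        linear_combination -h2
      exact hpa_ne0 h4
    omega
  -- membership of toggle positions
  have hIcoX : 2 ^ a ∈ Finset.Ico 1 n := Finset.mem_Ico.mpr ⟨hA1, hxn⟩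
  have hIcoU0 : 2 ^ a + 1 ∈ Finset.Ico 1 n := Finset.mem_Ico.mpr ⟨by omega, hu0n⟩
  have hxu0 : 2 ^ a ≠ 2 ^ a + 1 := by omega
  -- alpha hypotheses
  have HαP : ∀ u', u' ∈ Finset.Ico 1 n → 2 ≤ u' % p → ∀ T, T ⊆ Finset.Ico 1 n → u' ∈ T →
      ((alphaCount n T : ZMod p) = 0) := by
    intro u' _ hu2 T hT huT
    rw [alphaCount_factor n T hT huT huT (le_refl u')]
    push_cast
    rw [choose_zmod_p_zero hp hnmod hu2]
    ring
  have Hα2u0 : ∀ T, T ⊆ Finset.Ico 1 n → 2 ^ a + 1 ∈ T → ((alphaCount n T : ZMod 2) = 0) := by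
    intro T hT huT
    rw [alphaCount_factor n T hT huT huT (le_refl _)]
    push_cast
    have h0 : ((n.choose (2 ^ a + 1) : ℕ) : ZMod 2) = 0 := by
      rw [hnn]
      exact choose_n_even hab (by omega) (by omega) (by omega) (by omega)
    rw [h0]
    ring
  have Hα2x : ∀ T, T ⊆ Finset.Ico 1 n → 2 ^ a ∉ T →
      ((alphaCount n (insert (2 ^ a) T) : ZMod 2) = if T = ∅ then 1 else 0) := by
    intro T hT hxT
    by_cases hTe : T = ∅
    · rw [if_pos hTe, hTe]
      have hins : insert (2 ^ a) (∅ : Finset ℕ) = {2 ^ a} := by simp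
      rw [hins, alphaCount_singleton hA1 hxn, hnn]
      exact choose_n_x_odd hab
    · rw [if_neg hTe]
      have hVsub : insert (2 ^ a) T ⊆ Finset.Ico 1 n := Finset.insert_subset hIcoX hT
      by_cases hTy : T = {2 ^ b}
      · subst hTy
        rw [alphaCount_factor n (insert (2 ^ a) {2 ^ b}) hVsub
          (Finset.mem_insert_self _ _)
          (Finset.mem_insert_of_mem (Finset.mem_singleton_self _)) (le_of_lt hpow_lt)]
        push_cast
        have h0 : (((2 ^ b).choose (2 ^ a) : ℕ) : ZMod 2) = 0 := by
          rw [choose_pow_two_cast, if_neg (by push_neg; omega)]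
        rw [h0]
        ring
      · obtain ⟨s, hsT, hsy⟩ : ∃ s ∈ T, s ≠ 2 ^ b := by
          by_contra hcon
          push_neg at hcon
          have hsub : T ⊆ {2 ^ b} := fun z hz => Finset.mem_singleton.mpr (hcon z hz)
          rcases Finset.subset_singleton_iff.mp hsub with h | h
          · exact hTe h
          · exact hTy h
        have hsV : s ∈ insert (2 ^ a) T := Finset.mem_insert_of_mem hsT
        rw [alphaCount_factor n (insert (2 ^ a) T) hVsub hsV hsV (le_refl s)]
        push_cast
        have hsIco := Finset.mem_Ico.mp (hT hsT)
        have hsx : s ≠ 2 ^ a := fun hc => hxT (hc ▸ hsT)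
        have h0 : ((n.choose s : ℕ) : ZMod 2) = 0 := by
          rw [hnn]
          exact choose_n_even hab (by omega) (by omega) hsx hsy
        rw [h0]
        ring
  -- toggle congruences
  have hbpx := beta_tog (q := p) hIcoX (HαP _ hIcoX hxmod)
  have hbpu := beta_tog (q := p) hIcoU0 (HαP _ hIcoU0 hu0mod)
  have hb2x := beta_tog_two hIcoX Hα2x
  have hb2u := beta_tog (q := 2) hIcoU0 Hα2u0
  set J : Finset ℕ → Finset ℕ := fun S => tog (2 ^ a + 1) (tog (2 ^ a) S) with hJ
  have hJsub : ∀ S, S ⊆ Finset.Ico 1 n → J S ⊆ Finset.Ico 1 n :=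
    fun S hS => tog_subset hIcoU0 (tog_subset hIcoX hS)
  have hJJ : ∀ S, J (J S) = S := by
    intro S
    show tog (2 ^ a + 1) (tog (2 ^ a) (tog (2 ^ a + 1) (tog (2 ^ a) S))) = S
    rw [tog_comm hxu0 (tog (2 ^ a) S), tog_tog, tog_tog]
  have hJne : ∀ S, J S ≠ S := by
    intro S hc
    have h1 : 2 ^ a ∈ J S ↔ 2 ^ a ∉ S := by
      show 2 ^ a ∈ tog (2 ^ a + 1) (tog (2 ^ a) S) ↔ _
      rw [mem_tog_of_ne hxu0, mem_tog_self]
    rw [hc] at h1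
    tauto
  have hrelp : ∀ S, S ⊆ Finset.Ico 1 n → ((beta n (J S) : ZMod p) = beta n S) := by
    intro S hS
    have hx' : tog (2 ^ a) S ⊆ Finset.Ico 1 n := tog_subset hIcoX hS
    show ((beta n (tog (2 ^ a + 1) (tog (2 ^ a) S)) : ZMod p) = _)
    rw [hbpu _ hx', hbpx S hS]
    ring
  have hrel2 : ∀ S, S ⊆ Finset.Ico 1 n → ((beta n (J S) : ZMod 2) = beta n S + 1) := by
    intro S hS
    have hx' : tog (2 ^ a) S ⊆ Finset.Ico 1 n := tog_subset hIcoX hS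
    show ((beta n (tog (2 ^ a + 1) (tog (2 ^ a) S)) : ZMod 2) = _)
    rw [hb2u _ hx', CharTwo.neg_eq, hb2x S hS]
  -- key divisibility for each pair
  have key : ∀ S ∈ (Finset.Ico 1 n).powerset,
      Polynomial.cyclotomic (2 * p) ℤ ∣
        (Polynomial.X ^ beta n S + Polynomial.X ^ beta n (J S) : Polynomial ℤ) := by
    intro S hSpow
    have hS := Finset.mem_powerset.mp hSpow
    have hmp := hrelp S hS
    have hm2 := hrel2 S hS
    set b1 := beta n S with hb1
    set b2 := beta n (J S) with hb2
    have hpd : (p : ℤ) ∣ (b2 : ℤ) - b1 := by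
      rw [← ZMod.intCast_zmod_eq_zero_iff_dvd]
      push_cast
      rw [hmp]
      ring
    have h2d : ¬ (2 : ℤ) ∣ (b2 : ℤ) - b1 := by
      intro hc
      have h1 : (((b2 : ℤ) - b1 : ℤ) : ZMod 2) = 0 :=
        (ZMod.intCast_zmod_eq_zero_iff_dvd _ 2).mpr (by exact_mod_cast hc)
      push_cast at h1
      rw [hm2] at h1
      have : (1 : ZMod 2) = 0 := by linear_combination h1
      exact one_ne_zero this
    rcases le_total b1 b2 with hle | hle
    · have hmeq : b2 = b1 + (b2 - b1) := by omega
      have hmz : ((b2 - b1 : ℕ) : ℤ) = (b2 : ℤ) - b1 := by push_cast; omega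
      have hpm : p ∣ b2 - b1 := by
        have := hpd
        rw [← hmz] at this
        exact_mod_cast this
      have hm2' : ¬ 2 ∣ b2 - b1 := by
        intro hc
        apply h2d
        rw [← hmz]
        exact_mod_cast hc
      have hcyc := cyc_dvd_X_pow_add_one hp3 hpm hm2'
      have hre : (Polynomial.X : Polynomial ℤ) ^ b1 + Polynomial.X ^ b2 =
          Polynomial.X ^ b1 * (Polynomial.X ^ (b2 - b1) + 1) := by
        have hX : (Polynomial.X : Polynomial ℤ) ^ b2 = Polynomial.X ^ b1 *
            Polynomial.X ^ (b2 - b1) := by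
          rw [← pow_add]
          congr 1
          try omega
        rw [hX]
        ring
      rw [hre]
      exact Dvd.dvd.mul_left hcyc _
    · have hpd' : (p : ℤ) ∣ (b1 : ℤ) - b2 := by
        have h' := dvd_neg.mpr hpd
        rwa [neg_sub] at h'
      have h2d' : ¬ (2 : ℤ) ∣ (b1 : ℤ) - b2 := by
        intro hc
        apply h2d
        have h' := dvd_neg.mpr hc
        rwa [neg_sub] at h'
      have hmeq : b1 = b2 + (b1 - b2) := by omega
      have hmz : ((b1 - b2 : ℕ) : ℤ) = (b1 : ℤ) - b2 := by push_cast; omega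
      have hpm : p ∣ b1 - b2 := by
        have h' := hpd'
        rw [← hmz] at h'
        exact_mod_cast h'
      have hm2' : ¬ 2 ∣ b1 - b2 := by
        intro hc
        apply h2d'
        rw [← hmz]
        exact_mod_cast hc
      have hcyc := cyc_dvd_X_pow_add_one hp3 hpm hm2'
      have hre : (Polynomial.X : Polynomial ℤ) ^ b1 + Polynomial.X ^ b2 =
          Polynomial.X ^ b2 * (Polynomial.X ^ (b1 - b2) + 1) := by
        have hX : (Polynomial.X : Polynomial ℤ) ^ b1 = Polynomial.X ^ b2 *
            Polynomial.X ^ (b1 - b2) := by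
          rw [← pow_add]
          congr 1
          try omega
        rw [hX]
        ring
      rw [hre]
      exact Dvd.dvd.mul_left hcyc _
  -- conclude via the quotient ring and the involution J
  have hmem : Q n ∈ Ideal.span {Polynomial.cyclotomic (2 * p) ℤ} := by
    rw [← Ideal.Quotient.eq_zero_iff_mem]
    have hQ : (Ideal.Quotient.mk (Ideal.span {Polynomial.cyclotomic (2 * p) ℤ})) (Q n) =
        ∑ S ∈ (Finset.Ico 1 n).powerset,
          (Ideal.Quotient.mk (Ideal.span {Polynomial.cyclotomic (2 * p) ℤ}))
            (Polynomial.X ^ beta n S) := by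
      unfold Q
      rw [map_sum]
    rw [hQ]
    apply Finset.sum_involution (g := fun S _ => J S)
    · intro S hS
      rw [← map_add]
      exact Ideal.Quotient.eq_zero_iff_mem.mpr (Ideal.mem_span_singleton.mpr (key S hS))
    · intro S _ _
      exact hJne S
    · intro S hS
      exact Finset.mem_powerset.mpr (hJsub S (Finset.mem_powerset.mp hS))
    · intro S _
      exact hJJ S
  exact Ideal.mem_span_singleton.mp hmem
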